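/- Let n ≥ 1 and z : Fin n → ℝ, and define H : ℝ → ℝ by H(β) = −∑_i softmax(β·z)_i · log softmax(β·z)_i. Then for every β ∈ ℝ, H has derivative at β equal to −β · V(β), where V(β) = ∑_i softmax(β·z)_i · (z_i)² − (∑_i softmax(β·z)_i · z_i)² is the variance of the logits under the distribution softmax(β·z) (a HasDerivAt statement). -/

import Mathlib

open Real Set

/-- Softmax of a logit vector `w`. -/
noncomputable def softmax {n : ℕ} (w : Fin n → ℝ) (i : Fin n) : ℝ :=
  Real.exp (w i) / ∑ j, Real.exp (w j)

theorem entropy_hasDerivAt_neg_beta_mul_variance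
    (n : ℕ) (hn : 1 ≤ n) (z : Fin n → ℝ) (β : ℝ) :
    HasDerivAt
      (fun b : ℝ => -∑ i, softmax (fun k => b * z k) i * Real.log (softmax (fun k => b * z k) i))
      (-β * ((∑ i, softmax (fun k => β * z k) i * (z i) ^ 2)
        - (∑ i, softmax (fun k => β * z k) i * z i) ^ 2)) β := by
  haveI : NeZero n := ⟨Nat.one_le_iff_ne_zero.mp hn⟩
  set Z : ℝ → ℝ := fun b => ∑ j, Real.exp (b * z j) with hZdef
  set S1 : ℝ → ℝ := fun b => ∑ j, z j * Real.exp (b * z j) with hS1def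
  set S2 : ℝ → ℝ := fun b => ∑ j, z j ^ 2 * Real.exp (b * z j) with hS2def
  have hZpos : ∀ b, 0 < Z b := fun b =>
    Finset.sum_pos (fun j _ => Real.exp_pos _) Finset.univ_nonempty
  have hZ0 : ∀ b, Z b ≠ 0 := fun b => (hZpos b).ne'
  have hZd : ∀ b, HasDerivAt Z (S1 b) b := by
    intro b
    apply HasDerivAt.fun_sum
    intro j _
    simpa [mul_comm] using ((hasDerivAt_mul_const (z j)).exp :
      HasDerivAt (fun x : ℝ => Real.exp (x * z j)) (Real.exp (b * z j) * z j) b)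
  have hS1d : HasDerivAt S1 (S2 β) β := by
    apply HasDerivAt.fun_sum
    intro j _
    have := (((hasDerivAt_mul_const (z j)).exp :
      HasDerivAt (fun x : ℝ => Real.exp (x * z j)) (Real.exp (β * z j) * z j) β)).const_mul (z j)
    refine this.congr_deriv ?_
    ring
  have key : ∀ b : ℝ,
      -∑ i, softmax (fun k => b * z k) i * Real.log (softmax (fun k => b * z k) i)
      = Real.log (Z b) - b * (S1 b / Z b) := by
    intro b
    have hsm : ∀ i, softmax (fun k => b * z k) i = Real.exp (b * z i) / Z b := fun i => rfl
    have hlog : ∀ i : Fin n, Real.log (Real.exp (b * z i) / Z b)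
        = b * z i - Real.log (Z b) := by
      intro i
      rw [Real.log_div (Real.exp_ne_zero _) (hZ0 b), Real.log_exp]
    simp only [hsm, hlog]
    have h1 : ∀ i : Fin n, Real.exp (b * z i) / Z b * (b * z i - Real.log (Z b))
        = b / Z b * (z i * Real.exp (b * z i)) - Real.log (Z b) / Z b * Real.exp (b * z i) := by
      intro i; ring
    simp only [h1]
    rw [Finset.sum_sub_distrib, ← Finset.mul_sum, ← Finset.mul_sum]
    have e1 : ∑ j, z j * Real.exp (b * z j) = S1 b := rfl
    have e2 : ∑ j, Real.exp (b * z j) = Z b := rfl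
    rw [e1, e2]
    have hZb := hZ0 b
    field_simp
    ring
  have hfun : (fun b : ℝ => -∑ i, softmax (fun k => b * z k) i *
        Real.log (softmax (fun k => b * z k) i))
      = fun b => Real.log (Z b) - b * (S1 b / Z b) := funext key
  rw [hfun]
  -- rewrite the target value
  have ht1 : ∑ i, softmax (fun k => β * z k) i * (z i) ^ 2 = S2 β / Z β := by
    rw [hS2def, Finset.sum_div]
    apply Finset.sum_congr rfl
    intro i _
    show Real.exp (β * z i) / Z β * z i ^ 2 = _
    ring
  have ht2 : ∑ i, softmax (fun k => β * z k) i * z i = S1 β / Z β := by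
    rw [hS1def, Finset.sum_div]
    apply Finset.sum_congr rfl
    intro i _
    show Real.exp (β * z i) / Z β * z i = _
    ring
  rw [ht1, ht2]
  have hlogZ : HasDerivAt (fun b => Real.log (Z b)) (S1 β / Z β) β := (hZd β).log (hZ0 β)
  have hdiv : HasDerivAt (fun b => S1 b / Z b)
      ((S2 β * Z β - S1 β * S1 β) / Z β ^ 2) β := hS1d.div (hZd β) (hZ0 β)
  have hmul : HasDerivAt (fun b => b * (S1 b / Z b))
      (1 * (S1 β / Z β) + β * ((S2 β * Z β - S1 β * S1 β) / Z β ^ 2)) β :=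
    (hasDerivAt_id β).mul hdiv
  refine (hlogZ.sub hmul).congr_deriv ?_
  have hZβ := hZ0 β
  field_simp
  ring
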